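/- Let k > 0, r > 1, and set θ = (r − 1)/(r(1 + k)). Let X be a real random variable distributed as Gamma(k, θ), and let ε be a square-integrable real random variable independent of X with E[ε] = 1 and Var(ε) = v. If the variance-equilibrium condition E[(r·X·(1−X)·ε)²] − (kθ)² = kθ² holds, then r satisfies the quadratic equation (k + 3)·r² − (4k + 8)·r + (3k + 5 + (v/(v + 1))·(k + 1)²) = 0. -/

import Mathlib

open MeasureTheory ProbabilityTheory Real


section GammaAux
open Set

lemma aux_integrableOn (s b : ℝ) (hs : 0 < s) (hb : 0 < b) :
    IntegrableOn (fun x : ℝ => x ^ (s - 1) * exp (-(b * x))) (Ioi 0) := by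
  have h0 : IntegrableOn (fun x : ℝ => exp (-x) * x ^ (s - 1)) (Ioi 0) :=
    Real.GammaIntegral_convergent hs
  have h1 : IntegrableOn (fun x : ℝ => exp (-(b * x)) * (b * x) ^ (s - 1)) (Ioi 0) := by
    have := (integrableOn_Ioi_comp_mul_left_iff
      (fun x : ℝ => exp (-x) * x ^ (s - 1)) 0 hb).2 (by simpa using h0)
    simpa using this
  have h2 : IntegrableOn (fun x : ℝ => (b ^ (s-1))⁻¹ * (exp (-(b * x)) * (b * x) ^ (s - 1)))
      (Ioi 0) := h1.const_mul _
  refine h2.congr_fun (fun x hx => ?_) measurableSet_Ioi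
  rw [mem_Ioi] at hx
  beta_reduce
  rw [mul_rpow hb.le hx.le]
  field_simp [(rpow_pos_of_pos hb _).ne']

-- a.e. equality with indicator
lemma aux_ae_indicator (k b : ℝ) (n : ℕ) :
    (fun x => gammaPDFReal k b x * x ^ n) =ᵐ[volume]
      (Ioi (0:ℝ)).indicator (fun x => gammaPDFReal k b x * x ^ n) := by
  filter_upwards [compl_mem_ae_iff.2 (volume_singleton (a := (0:ℝ)))] with x hx
  rcases lt_trichotomy x 0 with h | h | h
  · rw [indicator_of_notMem (by simpa using h.le)]
    simp [gammaPDFReal, not_le.2 h, h.not_ge]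
  · exact absurd h hx
  · rw [indicator_of_mem (mem_Ioi.2 h)]

lemma aux_eq_on_Ioi (k b : ℝ) {x : ℝ} (hx : x ∈ Ioi (0:ℝ)) (n : ℕ) :
    gammaPDFReal k b x * x ^ n = b ^ k / Gamma k * (x ^ (k + n - 1) * exp (-(b * x))) := by
  rw [mem_Ioi] at hx
  rw [gammaPDFReal, if_pos hx.le]
  have : (x : ℝ) ^ n = x ^ (n : ℝ) := (rpow_natCast x n).symm
  rw [mul_assoc, mul_assoc, mul_comm (exp _), this, ← mul_assoc (x ^ (k-1)),
    ← rpow_add hx, sub_add_eq_add_sub]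

lemma aux_pdf_integrable (k b : ℝ) (hk : 0 < k) (hb : 0 < b) (n : ℕ) :
    Integrable (fun x => gammaPDFReal k b x * x ^ n) volume := by
  rw [integrable_congr (aux_ae_indicator k b n), integrable_indicator_iff measurableSet_Ioi]
  have : IntegrableOn (fun x : ℝ => b ^ k / Gamma k * (x ^ (k + n - 1) * exp (-(b * x))))
      (Ioi 0) := (aux_integrableOn (k + n) b (by positivity) hb).const_mul _
  exact this.congr_fun (fun x hx => (aux_eq_on_Ioi k b hx n).symm) measurableSet_Ioi

lemma aux_pdf_integral (k b : ℝ) (hk : 0 < k) (hb : 0 < b) (n : ℕ) :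
    ∫ x, gammaPDFReal k b x * x ^ n = Gamma (k + n) / Gamma k * (b ^ (n:ℕ))⁻¹ := by
  rw [integral_congr_ae (aux_ae_indicator k b n), integral_indicator measurableSet_Ioi]
  rw [setIntegral_congr_fun measurableSet_Ioi (fun x hx => aux_eq_on_Ioi k b hx n)]
  rw [integral_const_mul, integral_rpow_mul_exp_neg_mul_Ioi (by positivity : (0:ℝ) < k + n) hb]
  have hΓ : Gamma k ≠ 0 := (Gamma_pos_of_pos hk).ne'
  have h1 : (1 / b) ^ (k + (n:ℝ)) = (b ^ k)⁻¹ * (b ^ (n:ℕ) : ℝ)⁻¹ := by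
    rw [one_div, inv_rpow hb.le, rpow_add hb, mul_inv, rpow_natCast]
  rw [h1]
  have hbk : (0:ℝ) < b ^ k := rpow_pos_of_pos hb _
  field_simp

lemma aux_withDensity (k b : ℝ) :
    gammaMeasure k b =
      volume.withDensity (fun x => ((gammaPDFReal k b x).toNNReal : ENNReal)) := rfl

lemma aux_moment_integrable (k b : ℝ) (hk : 0 < k) (hb : 0 < b) (n : ℕ) :
    Integrable (fun x => x ^ n) (gammaMeasure k b) := by
  rw [aux_withDensity,
    integrable_withDensity_iff_integrable_smul (measurable_gammaPDFReal k b).real_toNNReal]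
  refine (aux_pdf_integrable k b hk hb n).congr (ae_of_all _ fun x => ?_)
  simp [NNReal.smul_def, Real.coe_toNNReal _ (gammaPDFReal_nonneg hk hb x)]

lemma aux_moment (k b : ℝ) (hk : 0 < k) (hb : 0 < b) (n : ℕ) :
    ∫ x, x ^ n ∂(gammaMeasure k b) = Gamma (k + n) / Gamma k * (b ^ (n:ℕ))⁻¹ := by
  rw [aux_withDensity,
    integral_withDensity_eq_integral_smul (measurable_gammaPDFReal k b).real_toNNReal,
    ← aux_pdf_integral k b hk hb n]
  refine integral_congr_ae (ae_of_all _ fun x => ?_)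
  simp [NNReal.smul_def, Real.coe_toNNReal _ (gammaPDFReal_nonneg hk hb x)]

end GammaAux

/-- Let `k > 0`, `r > 1`, `θ = (r − 1)/(r(1 + k))`, `X ~ Gamma(k, θ)` (rate `1/θ`),
and `ε` square-integrable, independent of `X`, with `E[ε] = 1` and `Var(ε) = v`. If the
variance-equilibrium condition `E[(r·X·(1−X)·ε)²] − (kθ)² = kθ²` holds, then `r` satisfies
`(k + 3)·r² − (4k + 8)·r + (3k + 5 + (v/(v + 1))·(k + 1)²) = 0`. -/
theorem stmt5 {Ω : Type*} {mΩ : MeasurableSpace Ω} (μ : Measure Ω) [IsProbabilityMeasure μ]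
    (k r θ v : ℝ) (hk : 0 < k) (hr : 1 < r) (hθ : θ = (r - 1) / (r * (1 + k)))
    (X ε : Ω → ℝ) (hXm : Measurable X)
    (hX : Measure.map X μ = gammaMeasure k θ⁻¹)
    (hε : MemLp ε 2 μ) (hindep : IndepFun ε X μ)
    (hεmean : ∫ ω, ε ω ∂μ = 1) (hεvar : variance ε μ = v)
    (heq : (∫ ω, (r * X ω * (1 - X ω) * ε ω) ^ 2 ∂μ) - (k * θ) ^ 2 = k * θ ^ 2) :
    (k + 3) * r ^ 2 - (4 * k + 8) * r + (3 * k + 5 + (v / (v + 1)) * (k + 1) ^ 2) = 0 := by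
  have hr0 : (0:ℝ) < r := lt_trans one_pos hr
  have hk1 : (0:ℝ) < 1 + k := by linarith
  have hθpos : 0 < θ := by
    rw [hθ]; exact div_pos (by linarith) (by positivity)
  have hb : 0 < θ⁻¹ := inv_pos.2 hθpos
  -- Gamma recurrences
  have hG1 : Gamma (k + 1) = k * Gamma k := Gamma_add_one hk.ne'
  have hG2 : Gamma (k + 2) = (k + 1) * (k * Gamma k) := by
    have : k + 2 = (k + 1) + 1 := by ring
    rw [this, Gamma_add_one (by positivity), hG1]
  have hG3 : Gamma (k + 3) = (k + 2) * ((k + 1) * (k * Gamma k)) := by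
    have : k + 3 = (k + 2) + 1 := by ring
    rw [this, Gamma_add_one (by positivity), hG2]
  have hG4 : Gamma (k + 4) = (k + 3) * ((k + 2) * ((k + 1) * (k * Gamma k))) := by
    have : k + 4 = (k + 3) + 1 := by ring
    rw [this, Gamma_add_one (by positivity), hG3]
  have hΓ : Gamma k ≠ 0 := (Gamma_pos_of_pos hk).ne'
  -- moments
  have hminv : ∀ n : ℕ, ((θ⁻¹) ^ (n:ℕ) : ℝ)⁻¹ = θ ^ (n:ℕ) := by
    intro n; rw [← inv_pow, inv_inv]
  have hm2 : ∫ x, x ^ 2 ∂(gammaMeasure k θ⁻¹) = k * (k+1) * θ ^ 2 := by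
    rw [aux_moment k θ⁻¹ hk hb 2, hminv]
    push_cast
    rw [hG2]
    field_simp
  have hm3 : ∫ x, x ^ 3 ∂(gammaMeasure k θ⁻¹) = k * (k+1) * (k+2) * θ ^ 3 := by
    rw [aux_moment k θ⁻¹ hk hb 3, hminv]
    push_cast
    rw [hG3]
    field_simp
  have hm4 : ∫ x, x ^ 4 ∂(gammaMeasure k θ⁻¹) = k * (k+1) * (k+2) * (k+3) * θ ^ 4 := by
    rw [aux_moment k θ⁻¹ hk hb 4, hminv]
    push_cast
    rw [hG4]
    field_simp
  -- integral of g(X)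
  have hgmeas : Measurable (fun x : ℝ => (r * x * (1 - x)) ^ 2) := by fun_prop
  have hgX : ∫ ω, (r * X ω * (1 - X ω)) ^ 2 ∂μ
      = r ^ 2 * (k * (k+1) * θ ^ 2 - 2 * (k * (k+1) * (k+2) * θ ^ 3)
          + k * (k+1) * (k+2) * (k+3) * θ ^ 4) := by
    have h1 : ∫ ω, (r * X ω * (1 - X ω)) ^ 2 ∂μ
        = ∫ x, (r * x * (1 - x)) ^ 2 ∂(gammaMeasure k θ⁻¹) := by
      rw [← hX, integral_map hXm.aemeasurable hgmeas.aestronglyMeasurable]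
    rw [h1]
    have hfe : (fun x : ℝ => (r * x * (1 - x)) ^ 2)
        = fun x => (r ^ 2 * x ^ 2 - r ^ 2 * 2 * x ^ 3) + r ^ 2 * x ^ 4 := by
      funext x; ring
    rw [hfe]
    have i2 : Integrable (fun x : ℝ => r ^ 2 * x ^ 2) (gammaMeasure k θ⁻¹) :=
      (aux_moment_integrable k θ⁻¹ hk hb 2).const_mul (r ^ 2)
    have i3 : Integrable (fun x : ℝ => r ^ 2 * 2 * x ^ 3) (gammaMeasure k θ⁻¹) :=
      (aux_moment_integrable k θ⁻¹ hk hb 3).const_mul (r ^ 2 * 2)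
    have i4 : Integrable (fun x : ℝ => r ^ 2 * x ^ 4) (gammaMeasure k θ⁻¹) :=
      (aux_moment_integrable k θ⁻¹ hk hb 4).const_mul (r ^ 2)
    have i23 : Integrable (fun x : ℝ => r ^ 2 * x ^ 2 - r ^ 2 * 2 * x ^ 3)
        (gammaMeasure k θ⁻¹) := i2.sub i3
    rw [integral_add i23 i4, integral_sub i2 i3, integral_const_mul,
      integral_const_mul, integral_const_mul, hm2, hm3, hm4]
    ring
  -- epsilon moments
  have hε2 : ∫ ω, ε ω ^ 2 ∂μ = v + 1 := by
    have := variance_eq_sub hε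
    rw [hεvar, hεmean] at this
    have h2 : ∫ ω, ε ω ^ 2 ∂μ = μ[ε ^ 2] := by rfl
    rw [h2]; linarith [this]
  -- independence factorization
  have hI : IndepFun (fun ω => (r * X ω * (1 - X ω)) ^ 2) (fun ω => ε ω ^ 2) μ :=
    (hindep.comp (by fun_prop : Measurable fun x : ℝ => x ^ 2) hgmeas).symm
  have hsplit : ∫ ω, (r * X ω * (1 - X ω) * ε ω) ^ 2 ∂μ
      = (∫ ω, (r * X ω * (1 - X ω)) ^ 2 ∂μ) * ∫ ω, ε ω ^ 2 ∂μ := by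
    have hfe : (fun ω => (r * X ω * (1 - X ω) * ε ω) ^ 2)
        = (fun ω => (r * X ω * (1 - X ω)) ^ 2) * (fun ω => ε ω ^ 2) := by
      funext ω; simp only [Pi.mul_apply]; ring
    rw [hfe]
    exact hI.integral_mul_eq_mul_integral
      (hgmeas.comp hXm).aestronglyMeasurable
      (hε.aestronglyMeasurable.aemeasurable.pow_const 2).aestronglyMeasurable
  rw [hsplit, hgX, hε2] at heq
  -- final algebra
  have hv0 : 0 ≤ v := hεvar ▸ variance_nonneg ε μ
  have hv1 : (0:ℝ) < v + 1 := by linarith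
  have hθr : θ * (r * (1 + k)) = r - 1 := by
    rw [hθ]; field_simp
  have hne : k * (k + 1) * θ ^ 2 ≠ 0 := by positivity
  have h' : (r ^ 2 * (v + 1) * (1 - 2 * (k + 2) * θ + (k + 2) * (k + 3) * θ ^ 2))
      * (k * (k + 1) * θ ^ 2) = 1 * (k * (k + 1) * θ ^ 2) := by linear_combination heq
  have key1 := mul_right_cancel₀ hne h'
  have key2 : (v + 1) * ((k + 3) * r ^ 2 - (4 * k + 8) * r + (k ^ 2 + 5 * k + 6))
      = (1 + k) ^ 2 := by
    linear_combination (1 + k) ^ 2 * key1 +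
      (v + 1) * (k + 2) * (2 * (r * (1 + k)) - (k + 3) * ((r - 1) + θ * (r * (1 + k)))) * hθr
  have hv1ne : v + 1 ≠ 0 := hv1.ne'
  field_simp
  linear_combination key2
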